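/- Let K ⊆ E be a compact convex set and let F be a proper exposed face of K such that every face of K contained in F is an exposed face of K. Then F can be written as a supremum of at most dim(F)+1 atoms of the exposed face lattice of K: there exist nonempty exposed faces A_1, …, A_d of K, each such that the only exposed face of K strictly contained in it is ∅, with d ≤ dim(F) + 1, such that F is the smallest exposed face of K containing A_1 ∪ ⋯ ∪ A_d. -/

import Mathlib

open scoped Pointwise RealInnerProductSpace

variable {E : Type*} [NormedAddCommGroup E] [InnerProductSpace ℝ E] [FiniteDimensional ℝ E]

/-- `F` is a face of the convex set `C`: a convex subset of `C` such that whenever an open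
segment between two points of `C` meets `F`, both endpoints belong to `F`. -/
def IsFace (C F : Set E) : Prop :=
  Convex ℝ F ∧ F ⊆ C ∧
    ∀ x ∈ C, ∀ y ∈ C, (openSegment ℝ x y ∩ F).Nonempty → x ∈ F ∧ y ∈ F

/-- The exposed face `F⊥(C,u)` of `C` by the vector `u`: the points of `C` where `⟨u,·⟩`
attains its supremum over `C`. -/
def expFace (C : Set E) (u : E) : Set E :=
  {x ∈ C | ∀ y ∈ C, ⟪u, y⟫ ≤ ⟪u, x⟫}

/-- `F` is an exposed face of `C`: either `∅`, or `C`, or `F⊥(C,u)` for some nonzero `u`. -/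
def IsExpFace (C F : Set E) : Prop :=
  F = ∅ ∨ F = C ∨ ∃ u : E, u ≠ 0 ∧ F = expFace C u

/-- The normal cone `N(C,x)` of `C` at the point `x`. -/
def normalCone (C : Set E) (x : E) : Set E :=
  {u | ∀ y ∈ C, ⟪u, y - x⟫ ≤ 0}

/-- The normal cone `N(C,F)` of `C` at a subset `F`; for a nonempty convex `F ⊆ C` it agrees
with `normalCone C x` for any `x` in the relative interior of `F` (all these coincide), and
for `F = ∅` it is all of `E`. -/
def normalConeOf (C F : Set E) : Set E :=
  ⋂ x ∈ intrinsicInterior ℝ F, normalCone C x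

/-- `N` is a normal cone of `C`: the normal cone of some face of `C`. -/
def IsNormalCone (C N : Set E) : Prop :=
  ∃ F, IsFace C F ∧ N = normalConeOf C F

/-- `T` is a touching cone of `C`: a nonempty face of a normal cone of `C`. -/
def IsTouchingCone (C T : Set E) : Prop :=
  T.Nonempty ∧ ∃ N, IsNormalCone C N ∧ IsFace N T

/-- The positive hull of a set: all finite nonnegative combinations (`posHull ∅ = {0}`). -/
def posHull (S : Set E) : Set E :=
  {x | ∃ (k : ℕ) (c : Fin k → ℝ) (s : Fin k → E),
    (∀ i, 0 ≤ c i) ∧ (∀ i, s i ∈ S) ∧ x = ∑ i, c i • s i}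

/-- A vector `u` is sharp normal for `C` if every `x ∈ ri(F⊥(C,u))` satisfies
`u ∈ ri(N(C,x))`. -/
def SharpNormal (C : Set E) (u : E) : Prop :=
  ∀ x ∈ intrinsicInterior ℝ (expFace C u), u ∈ intrinsicInterior ℝ (normalCone C x)

/-- A point `x` is sharp exposed in `C` if every nonzero `u ∈ ri(N(C,x))` satisfies
`x ∈ ri(F⊥(C,u))`. -/
def SharpExposed (C : Set E) (x : E) : Prop :=
  ∀ u ∈ intrinsicInterior ℝ (normalCone C x), u ≠ 0 → x ∈ intrinsicInterior ℝ (expFace C u)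

/-- The smallest exposed face of `C` containing `F`: the intersection of all exposed faces
of `C` containing `F`. -/
def supExp (C F : Set E) : Set E :=
  ⋂₀ {G | IsExpFace C G ∧ F ⊆ G}

/-- The polar body of `K`. -/
def polarBody (K : Set E) : Set E := {u | ∀ y ∈ K, ⟪u, y⟫ ≤ 1}

open Set

lemma isExposed_expFace (C : Set E) (u : E) : IsExposed ℝ C (expFace C u) :=
  fun _ => ⟨innerSL ℝ u, by ext x; simp [expFace]⟩

/-- Supporting functional within the span at an "endpoint". -/
lemma exists_support {F : Set E} (hFc : IsCompact F) (hFconv : Convex ℝ F)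
    {p w : E} (hp : p ∈ F) (hw : w ∈ vectorSpan ℝ F)
    (hout : ∀ t : ℝ, 0 < t → p + t • w ∉ F) :
    ∃ u : E, u ∈ vectorSpan ℝ F ∧ ‖u‖ = 1 ∧ ∀ z ∈ F, ⟪u, z⟫ ≤ ⟪u, p⟫ := by
  classical
  set V := vectorSpan ℝ F with hV
  have hFcl : IsClosed F := hFc.isClosed
  have sep : ∀ k : ℕ, ∃ u : E, u ∈ V ∧ ‖u‖ = 1 ∧
      ∀ z ∈ F, ⟪u, z⟫ ≤ ⟪u, p⟫ + (1/((k:ℝ)+1)) * ‖w‖ := by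
    intro k
    set ε : ℝ := 1/((k:ℝ)+1) with hεdef
    have hk : (0:ℝ) < ε := by positivity
    set zk : E := p + ε • w with hzk
    have hzkF : zk ∉ F := hout ε hk
    obtain ⟨f, c, hfc, hfb⟩ := geometric_hahn_banach_point_closed hFconv hFcl hzkF
    set v : E := -((InnerProductSpace.toDual ℝ E).symm f) with hvdef
    have hv : ∀ z : E, ⟪v, z⟫ = - f z := by
      intro z
      rw [hvdef, inner_neg_left, InnerProductSpace.toDual_symm_apply]
    have hsep : ∀ z ∈ F, ⟪v, z⟫ < ⟪v, zk⟫ := by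
      intro z hz
      rw [hv, hv]
      have := hfb z hz
      linarith
    set u0 : E := (Submodule.orthogonalProjectionOnto V v : E) with hu0
    have hproj : ∀ m ∈ V, ⟪u0, m⟫ = ⟪v, m⟫ := by
      intro m hm
      have h0 := V.starProjection_inner_eq_zero v m hm
      have : ⟪v, m⟫ - ⟪u0, m⟫ = 0 := by
        rw [← inner_sub_left]; exact h0
      linarith
    have hmemV : ∀ z ∈ F, zk - z ∈ V := by
      intro z hz
      have h1 : p - z ∈ V := vsub_mem_vectorSpan ℝ hp hz
      have heq : zk - z = (p - z) + ε • w := by rw [hzk]; module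
      rw [heq]
      exact V.add_mem h1 (V.smul_mem _ hw)
    have hsep2 : ∀ z ∈ F, ⟪u0, z⟫ < ⟪u0, zk⟫ := by
      intro z hz
      have h1 : ⟪u0, zk - z⟫ = ⟪v, zk - z⟫ := hproj _ (hmemV z hz)
      rw [inner_sub_right, inner_sub_right] at h1
      have := hsep z hz
      linarith
    have hu0ne : u0 ≠ 0 := by
      intro h0
      have := hsep2 p hp
      rw [h0] at this
      simp at this
    have hnrm : (0:ℝ) < ‖u0‖ := norm_pos_iff.2 hu0ne
    refine ⟨‖u0‖⁻¹ • u0, V.smul_mem _ (Submodule.orthogonalProjectionOnto V v).2, ?_, ?_⟩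
    · rw [norm_smul, norm_inv, norm_norm]
      field_simp
    · intro z hz
      have h2 : ⟪u0, z⟫ ≤ ⟪u0, p⟫ + ε * ⟪u0, w⟫ := by
        have := hsep2 z hz
        rw [hzk, inner_add_right, real_inner_smul_right] at this
        linarith
      rw [real_inner_smul_left, real_inner_smul_left]
      have hwle : ⟪u0, w⟫ ≤ ‖u0‖ * ‖w‖ := real_inner_le_norm u0 w
      have hinv : (0:ℝ) < ‖u0‖⁻¹ := by positivity
      have hmain : ‖u0‖⁻¹ * ⟪u0, z⟫ ≤ ‖u0‖⁻¹ * (⟪u0, p⟫ + ε * ⟪u0, w⟫) :=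
        mul_le_mul_of_nonneg_left h2 hinv.le
      have hsmall : ‖u0‖⁻¹ * ⟪u0, w⟫ ≤ ‖w‖ := by
        rw [inv_mul_le_iff₀ hnrm]
        nlinarith [hwle]
      have hε : ε = 1/((k:ℝ)+1) := hεdef
      nlinarith [hk.le, hmain, hsmall]
  choose uk hk1 hk2 hk3 using sep
  have hVcl : IsClosed (V : Set E) := V.closed_of_finiteDimensional
  have hScomp : IsCompact (Metric.sphere (0:E) 1 ∩ V) :=
    (isCompact_sphere 0 1).inter_right hVcl
  have hmem : ∀ k, uk k ∈ Metric.sphere (0:E) 1 ∩ V := by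
    intro k
    exact ⟨by simp [hk2 k], hk1 k⟩
  obtain ⟨u, huS, φ, hφ, hconv⟩ := hScomp.tendsto_subseq hmem
  refine ⟨u, huS.2, by simpa using huS.1, ?_⟩
  intro z hz
  have h1 : Filter.Tendsto (fun j => ⟪uk (φ j), z⟫) Filter.atTop (nhds ⟪u, z⟫) :=
    (hconv.inner tendsto_const_nhds)
  have h2 : Filter.Tendsto (fun j => ⟪uk (φ j), p⟫ + (1/(φ j+1)) * ‖w‖) Filter.atTop
      (nhds (⟪u, p⟫ + 0 * ‖w‖)) := by
    refine Filter.Tendsto.add (hconv.inner tendsto_const_nhds) ?_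
    exact (tendsto_one_div_add_atTop_nhds_zero_nat.comp hφ.tendsto_atTop).mul_const _
  have h3 : ∀ j, ⟪uk (φ j), z⟫ ≤ ⟪uk (φ j), p⟫ + (1/(φ j+1)) * ‖w‖ := fun j => hk3 _ z hz
  have := le_of_tendsto_of_tendsto' h1 h2 h3
  simpa using this

lemma minkowski : ∀ (n : ℕ) (F : Set E), IsCompact F → Convex ℝ F →
    Module.finrank ℝ (vectorSpan ℝ F) ≤ n → F ⊆ convexHull ℝ (F.extremePoints ℝ) := by
  intro n
  induction n with
  | zero =>
    intro F hFc hFconv hdim x hx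
    have hbot : vectorSpan ℝ F = ⊥ :=
      Submodule.finrank_eq_zero.1 (le_antisymm hdim (Nat.zero_le _))
    have hFx : F = {x} := by
      apply Set.eq_singleton_iff_unique_mem.2 ⟨hx, fun y hy => ?_⟩
      have h1 := vsub_mem_vectorSpan ℝ hy hx
      rw [hbot, Submodule.mem_bot] at h1
      exact sub_eq_zero.1 h1
    rw [hFx, extremePoints_singleton]
    exact subset_convexHull ℝ _ rfl
  | succ n ih =>
    intro F hFc hFconv hdim x hx
    by_cases hsing : ∀ y ∈ F, y = x
    · have hFx : F = {x} := Set.eq_singleton_iff_unique_mem.2 ⟨hx, hsing⟩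
      rw [hFx, extremePoints_singleton]
      exact subset_convexHull ℝ _ rfl
    push_neg at hsing
    obtain ⟨y, hy, hyx⟩ := hsing
    set f : ℝ →ᵃ[ℝ] E := AffineMap.lineMap x y with hfdef
    have hfeval : ∀ t : ℝ, f t = x + t • (y - x) := by
      intro t
      simp [hfdef, AffineMap.lineMap_apply]
      abel
    have hfcont : Continuous f := f.continuous_of_finiteDimensional
    set S : Set ℝ := f ⁻¹' F with hSdef
    have hSconv : Convex ℝ S := hFconv.affine_preimage f
    have hScl : IsClosed S := hFc.isClosed.preimage hfcont
    have hyx0 : y - x ≠ 0 := sub_ne_zero.2 hyx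
    have hnrm : (0:ℝ) < ‖y - x‖ := norm_pos_iff.2 hyx0
    obtain ⟨C, hC⟩ := isBounded_iff_forall_norm_le.1 hFc.isBounded
    have hSbdd : Bornology.IsBounded S := by
      rw [isBounded_iff_forall_norm_le]
      refine ⟨(C + ‖x‖)/‖y - x‖, fun t ht => ?_⟩
      have h1 : ‖f t‖ ≤ C := hC _ ht
      have h2 : ‖t • (y - x)‖ = ‖f t - x‖ := by rw [hfeval]; congr 1; abel
      have h3 : ‖f t - x‖ ≤ C + ‖x‖ := le_trans (norm_sub_le _ _) (by linarith)
      rw [norm_smul, Real.norm_eq_abs] at h2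
      rw [Real.norm_eq_abs, le_div_iff₀ hnrm]
      linarith
    have hScomp : IsCompact S := Metric.isCompact_of_isClosed_isBounded hScl hSbdd
    have h0 : (0:ℝ) ∈ S := by
      have : f 0 = x := by rw [hfeval]; simp
      simp [hSdef, this, hx]
    have h1 : (1:ℝ) ∈ S := by
      have : f 1 = y := by rw [hfeval]; simp
      simp [hSdef, this, hy]
    have hIcc : S = Set.Icc (sInf S) (sSup S) :=
      eq_Icc_of_connected_compact ⟨⟨0, h0⟩, hSconv.isPreconnected⟩ hScomp
    set a := sInf S with ha
    set b := sSup S with hb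
    have h0ab : a ≤ 0 ∧ 0 ≤ b := by rwa [hIcc, Set.mem_Icc] at h0
    have h1ab : a ≤ 1 ∧ 1 ≤ b := by rwa [hIcc, Set.mem_Icc] at h1
    have hab : a ≤ b := le_trans h0ab.1 h0ab.2
    have hpa : f a ∈ F := by
      have : a ∈ S := by rw [hIcc]; exact Set.left_mem_Icc.2 hab
      exact this
    have hpb : f b ∈ F := by
      have : b ∈ S := by rw [hIcc]; exact Set.right_mem_Icc.2 hab
      exact this
    -- the two endpoints are beyond-extendable
    have houta : ∀ t : ℝ, 0 < t → f a + t • (x - y) ∉ F := by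
      intro t ht hmem
      have heq : f a + t • (x - y) = f (a - t) := by
        rw [hfeval, hfeval]
        match_scalars <;> ring
      rw [heq] at hmem
      have : a - t ∈ S := hmem
      rw [hIcc, Set.mem_Icc] at this
      linarith [this.1]
    have houtb : ∀ t : ℝ, 0 < t → f b + t • (y - x) ∉ F := by
      intro t ht hmem
      have heq : f b + t • (y - x) = f (b + t) := by
        rw [hfeval, hfeval]
        match_scalars <;> ring
      rw [heq] at hmem
      have : b + t ∈ S := hmem
      rw [hIcc, Set.mem_Icc] at this
      linarith [this.2]
    -- supporting functionals
    have hxyV : x - y ∈ vectorSpan ℝ F := vsub_mem_vectorSpan ℝ hx hy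
    have hyxV : y - x ∈ vectorSpan ℝ F := vsub_mem_vectorSpan ℝ hy hx
    obtain ⟨u₁, hu₁V, hu₁n, hu₁supp⟩ := exists_support hFc hFconv hpa hxyV houta
    obtain ⟨u₂, hu₂V, hu₂n, hu₂supp⟩ := exists_support hFc hFconv hpb hyxV houtb
    -- the exposed faces
    have key : ∀ (u : E) (p : E), u ∈ vectorSpan ℝ F → ‖u‖ = 1 → p ∈ F →
        (∀ z ∈ F, ⟪u, z⟫ ≤ ⟪u, p⟫) → p ∈ convexHull ℝ (F.extremePoints ℝ) := by
      intro u p huV hun hpF hsupp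
      set G : Set E := expFace F u with hGdef
      have hGexp : IsExposed ℝ F G := isExposed_expFace F u
      have hGpF : p ∈ G := ⟨hpF, hsupp⟩
      have hGcomp : IsCompact G := hGexp.isCompact hFc
      have hGconv : Convex ℝ G := hGexp.convex hFconv
      have horth : ∀ m ∈ vectorSpan ℝ G, ⟪u, m⟫ = 0 := by
        intro m hm
        induction hm using Submodule.span_induction with
        | mem v hv =>
          obtain ⟨g, hg, g', hg', rfl⟩ := hv
          have h1 : ⟪u, g⟫ ≤ ⟪u, g'⟫ := hg'.2 g hg.1
          have h2 : ⟪u, g'⟫ ≤ ⟪u, g⟫ := hg.2 g' hg'.1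
          simp only [vsub_eq_sub]
          rw [inner_sub_right]
          linarith
        | zero => simp
        | add v w _ _ hv hw => rw [inner_add_right, hv, hw]; ring
        | smul c v _ hv => rw [real_inner_smul_right, hv]; ring
      have huG : u ∉ vectorSpan ℝ G := by
        intro hmem
        have := horth u hmem
        rw [real_inner_self_eq_norm_sq, hun] at this
        norm_num at this
      have hlt : vectorSpan ℝ G < vectorSpan ℝ F :=
        lt_of_le_of_ne (vectorSpan_mono ℝ hGexp.subset) (fun h => huG (h ▸ huV))
      have hdim' : Module.finrank ℝ (vectorSpan ℝ G) ≤ n := by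
        have := Submodule.finrank_lt_finrank_of_lt hlt
        omega
      have hp' : p ∈ convexHull ℝ (G.extremePoints ℝ) := ih G hGcomp hGconv hdim' hGpF
      exact convexHull_mono hGexp.isExtreme.extremePoints_subset_extremePoints hp'
    have hfa : f a ∈ convexHull ℝ (F.extremePoints ℝ) := key u₁ (f a) hu₁V hu₁n hpa hu₁supp
    have hfb : f b ∈ convexHull ℝ (F.extremePoints ℝ) := key u₂ (f b) hu₂V hu₂n hpb hu₂supp
    have hxseg : x ∈ segment ℝ (f a) (f b) := by
      rw [← image_segment, segment_eq_Icc hab]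
      refine ⟨0, ⟨h0ab.1, h0ab.2⟩, ?_⟩
      rw [hfeval]; simp
    exact (convex_convexHull ℝ _).segment_subset hfa hfb hxseg

lemma face_subset_of_mem_intrinsicInterior {K G F : Set E} (hG : IsExtreme ℝ K G)
    (hFK : F ⊆ K) {x : E} (hx : x ∈ intrinsicInterior ℝ F) (hxG : x ∈ G) : F ⊆ G := by
  intro y hy
  by_cases hyx : y = x
  · exact hyx ▸ hxG
  obtain ⟨x', hx'int, hx'eq⟩ := mem_intrinsicInterior.1 hx
  have hxspan : x ∈ affineSpan ℝ F := hx'eq ▸ x'.2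
  have hyspan : y ∈ affineSpan ℝ F := subset_affineSpan ℝ F hy
  have hmem : ∀ t : ℝ, x + t • (x - y) ∈ affineSpan ℝ F := by
    intro t
    have h := AffineSubspace.smul_vsub_vadd_mem (affineSpan ℝ F) t hxspan hyspan hxspan
    have heq : t • (x -ᵥ y) +ᵥ x = x + t • (x - y) := by
      simp [vsub_eq_sub, vadd_eq_add]; abel
    rwa [heq] at h
  set g : ℝ → affineSpan ℝ F := fun t => ⟨x + t • (x - y), hmem t⟩ with hgdef
  have hgcont : Continuous g := by
    apply Continuous.subtype_mk
    fun_prop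
  have hg0 : g 0 = x' := by
    apply Subtype.ext
    simp [hgdef, hx'eq]
  have hopen : IsOpen (g ⁻¹' interior (((↑) : affineSpan ℝ F → E) ⁻¹' F)) :=
    isOpen_interior.preimage hgcont
  have h0mem : (0:ℝ) ∈ g ⁻¹' interior (((↑) : affineSpan ℝ F → E) ⁻¹' F) := by
    rw [Set.mem_preimage, hg0]; exact hx'int
  obtain ⟨ε, hε, hball⟩ := Metric.isOpen_iff.1 hopen 0 h0mem
  set t := ε/2 with htdef
  have ht : 0 < t := by positivity
  have htmem : t ∈ g ⁻¹' interior (((↑) : affineSpan ℝ F → E) ⁻¹' F) := by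
    apply hball
    rw [Metric.mem_ball, Real.dist_eq, sub_zero, abs_of_pos ht]
    rw [htdef]
    linarith
  have hzF : x + t • (x - y) ∈ F := by
    have hsub := interior_subset (Set.mem_preimage.1 htmem)
    exact hsub
  have h1t : (0:ℝ) < 1 + t := by linarith
  have hseg : x ∈ openSegment ℝ y (x + t • (x - y)) := by
    refine ⟨t/(1+t), 1/(1+t), by positivity, by positivity, by field_simp; ring, ?_⟩
    match_scalars <;> (field_simp; try ring)
  exact hG.2 (hFK hy) (hFK hzF) hxG hseg

/-- Let `K` be a compact convex set and `F` a proper exposed face of `K`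
such that every face of `K` contained in `F` is exposed. Then `F` is the supremum (in the
exposed face lattice, i.e. the smallest exposed face containing the union) of at most
`dim F + 1` atoms of the exposed face lattice of `K`. -/
theorem stmt_19 (K : Set E) (hK : Convex ℝ K) (hKc : IsCompact K)
    (F : Set E) (hF : IsExpFace K F) (hFne : F ≠ ∅) (hFK : F ≠ K)
    (hall : ∀ G, IsFace K G → G ⊆ F → IsExpFace K G) :
    ∃ (d : ℕ) (A : Fin d → Set E),
      d ≤ Module.finrank ℝ (affineSpan ℝ F).direction + 1 ∧
      (∀ i, IsExpFace K (A i) ∧ (A i).Nonempty ∧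
        ∀ A', IsExpFace K A' → A' ⊆ A i → A' ≠ A i → A' = ∅) ∧
      F = supExp K (⋃ i, A i) := by
  classical
  obtain hFe | hFK' | ⟨u, hu0, hFu⟩ := hF
  · exact absurd hFe hFne
  · exact absurd hFK' hFK
  have hFexp : IsExposed ℝ K F := by rw [hFu]; exact isExposed_expFace K u
  have hFsubK : F ⊆ K := hFexp.subset
  have hFconv : Convex ℝ F := hFexp.convex hK
  have hFcomp : IsCompact F := hFexp.isCompact hKc
  have hFne' : F.Nonempty := Set.nonempty_iff_ne_empty.2 hFne
  obtain ⟨x, hxint⟩ := hFne'.intrinsicInterior hFconv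
  have hxF : x ∈ F := intrinsicInterior_subset hxint
  have hxhull : x ∈ convexHull ℝ (F.extremePoints ℝ) :=
    minkowski (Module.finrank ℝ (vectorSpan ℝ F)) F hFcomp hFconv le_rfl hxF
  obtain ⟨ι, hι, z, w, hzran, hzaff, hwpos, hwsum, hwz⟩ :=
    eq_pos_convex_span_of_mem_convexHull hxhull
  letI := hι
  have hιne : Nonempty ι := by
    rcases isEmpty_or_nonempty ι with h | h
    · rw [Finset.univ_eq_empty, Finset.sum_empty] at hwsum; norm_num at hwsum
    · exact h
  set d := Fintype.card ι with hd
  set e := Fintype.equivFin ι with he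
  refine ⟨d, fun i => {z (e.symm i)}, ?_, ?_, ?_⟩
  · have h1 : d ≤ Module.finrank ℝ (vectorSpan ℝ (Set.range z)) + 1 :=
      hzaff.card_le_finrank_succ
    have h2 : vectorSpan ℝ (Set.range z) ≤ vectorSpan ℝ F :=
      vectorSpan_mono ℝ (hzran.trans extremePoints_subset)
    have h3 := Submodule.finrank_mono h2
    rw [direction_affineSpan]
    omega
  · intro i
    have hzj : z (e.symm i) ∈ F.extremePoints ℝ := hzran ⟨e.symm i, rfl⟩
    have hKF : IsExtreme ℝ K F := hFexp.isExtreme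
    have hzjK : z (e.symm i) ∈ K.extremePoints ℝ :=
      hKF.extremePoints_subset_extremePoints hzj
    have hsingle : IsExtreme ℝ K {z (e.symm i)} := isExtreme_singleton.2 hzjK
    have hface : IsFace K {z (e.symm i)} :=
      ⟨convex_singleton _, hsingle.1,
        fun a ha b hb ⟨c, hc1, hc2⟩ => ⟨hsingle.2 ha hb hc2 hc1, hsingle.right_mem_of_mem_openSegment ha hb hc2 hc1⟩⟩
    refine ⟨hall _ hface (Set.singleton_subset_iff.2 hzj.1), Set.singleton_nonempty _, ?_⟩
    intro A' _ hsub hne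
    rcases Set.subset_singleton_iff_eq.1 hsub with h | h
    · exact h
    · exact absurd h hne
  · have hunion : (⋃ i, ({z (e.symm i)} : Set E)) ⊆ F := by
      intro a ha
      simp only [Set.mem_iUnion, Set.mem_singleton_iff] at ha
      obtain ⟨i, rfl⟩ := ha
      exact (hzran ⟨_, rfl⟩).1
    apply Set.Subset.antisymm
    · intro a haF
      rw [supExp, Set.mem_sInter]
      rintro G ⟨hGexp, hGsup⟩
      have hzG : ∀ i : ι, z i ∈ G := by
        intro i
        apply hGsup
        refine Set.mem_iUnion.2 ⟨e i, ?_⟩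
        simp
      rcases hGexp with hGe | hGK | ⟨v, hv0, hGv⟩
      · obtain ⟨i⟩ := hιne
        exact absurd (hGe ▸ hzG i) (Set.notMem_empty _)
      · exact hGK ▸ hFsubK haF
      · have hGexp2 : IsExposed ℝ K G := by rw [hGv]; exact isExposed_expFace K v
        have hGconv : Convex ℝ G := hGexp2.convex hK
        have hxG : x ∈ G := by
          rw [← hwz]
          exact hGconv.sum_mem (fun i _ => (hwpos i).le) hwsum (fun i _ => hzG i)
        exact face_subset_of_mem_intrinsicInterior hGexp2.isExtreme hFsubK hxint hxG haF
    · exact Set.sInter_subset_of_mem ⟨Or.inr (Or.inr ⟨u, hu0, hFu⟩), hunion⟩
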